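/- Let d ≥ 2 with a prime factor p, and Γ_n ∈ ℤ[b] defined by Γ_0 = 0, Γ_{n+1} = Γ_n^d + b. Let N > n ≥ 2, let ω be a d-th root of unity with ν(1 - ω) < 1 for some valuation ν extending ν_p, and set Δ = Γ_{N-1} - ω·Γ_{n-1} ∈ ℤ[ω][b]. Then every root of Δ in ℚ̄ is a simple root. -/

import Mathlib

open Polynomial

lemma vnat_nonneg {K : Type*} [Field K] (v : AddValuation K (WithTop ℝ)) :
    ∀ k : ℤ, 0 ≤ v ((k : ℤ) : K) := by
  have hnat : ∀ m : ℕ, 0 ≤ v ((m : ℕ) : K) := by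
    intro m
    induction m with
    | zero => simp
    | succ m ih =>
      push_cast
      refine le_trans (le_min ih ?_) (v.map_add _ _)
      simp
  intro k
  rcases Int.natAbs_eq k with h | h
  · rw [h, Int.cast_natCast]; exact hnat _
  · rw [h, Int.cast_neg, Int.cast_natCast, v.map_neg]; exact hnat _

lemma veval_nonneg {K : Type*} [Field K] (v : AddValuation K (WithTop ℝ)) {β : K}
    (hβ : 0 ≤ v β) (q : Polynomial ℤ) :
    0 ≤ v ((q.map (Int.castRingHom K)).eval β) := by
  induction q using Polynomial.induction_on with
  | C a => simpa using vnat_nonneg v a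
  | add p q hp hq =>
    rw [Polynomial.map_add, eval_add]
    exact le_trans (le_min hp hq) (v.map_add _ _)
  | monomial n a _ =>
    rw [Polynomial.map_mul, Polynomial.map_C, Polynomial.map_pow, Polynomial.map_X,
      eval_mul, eval_pow, eval_X, eval_C, v.map_mul, v.map_pow]
    refine add_nonneg ?_ (nsmul_nonneg hβ _)
    simpa using vnat_nonneg v a

lemma gamma_monic (d : ℕ) (hd : 2 ≤ d)
    (Γ : ℕ → Polynomial ℤ) (h0 : Γ 0 = 0) (hrec : ∀ m, Γ (m + 1) = (Γ m) ^ d + X) :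
    ∀ m, (Γ (m + 1)).Monic ∧ (Γ (m + 1)).natDegree = d ^ m := by
  intro m
  induction m with
  | zero =>
    have h1 : Γ 1 = X := by
      rw [hrec 0, h0, zero_pow (by omega : d ≠ 0), zero_add]
    rw [h1]
    exact ⟨monic_X, natDegree_X⟩
  | succ m ih =>
    obtain ⟨hmon, hdeg⟩ := ih
    have hpow : ((Γ (m + 1)) ^ d).Monic := hmon.pow d
    have hdegpow : ((Γ (m + 1)) ^ d).natDegree = d ^ (m + 1) := by
      rw [natDegree_pow, hdeg, pow_succ, mul_comm]
    have hlt : (X : Polynomial ℤ).degree < ((Γ (m + 1)) ^ d).degree := by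
      rw [degree_X, degree_eq_natDegree hpow.ne_zero, hdegpow]
      have : 1 < d ^ (m + 1) :=
        lt_of_lt_of_le (by omega : 1 < d) (Nat.le_self_pow (by omega) d)
      exact_mod_cast this
    constructor
    · rw [hrec]; exact hpow.add_of_left hlt
    · rw [hrec, natDegree_add_eq_left_of_degree_lt hlt, hdegpow]

lemma gamma_deriv (d : ℕ) (hd : 2 ≤ d) (p : ℕ) (hpd : p ∣ d)
    (Γ : ℕ → Polynomial ℤ) (h0 : Γ 0 = 0) (hrec : ∀ m, Γ (m + 1) = (Γ m) ^ d + X) :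
    ∀ m, ∃ Q : Polynomial ℤ, derivative (Γ (m + 1)) = 1 + C (p : ℤ) * Q := by
  intro m
  induction m with
  | zero =>
    have h1 : Γ 1 = X := by
      rw [hrec 0, h0, zero_pow (by omega : d ≠ 0), zero_add]
    exact ⟨0, by rw [h1, derivative_X]; ring⟩
  | succ m ih =>
    obtain ⟨k, hk⟩ := hpd
    refine ⟨C (k : ℤ) * (Γ (m + 1)) ^ (d - 1) * derivative (Γ (m + 1)), ?_⟩
    rw [hrec (m + 1), derivative_add, derivative_X, derivative_pow]
    have : (C ((d : ℕ) : ℤ) : Polynomial ℤ) = C ((p : ℕ) : ℤ) * C ((k : ℕ) : ℤ) := by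
      rw [← C_mul]
      congr 1
      push_cast [hk]
      ring
    rw [this]
    ring

open Polynomial in
theorem delta_roots_simple (d : ℕ) (hd : 2 ≤ d) (p : ℕ) (hp : p.Prime) (hpd : p ∣ d)
    (Γ : ℕ → Polynomial ℤ) (h0 : Γ 0 = 0) (hrec : ∀ m, Γ (m + 1) = (Γ m) ^ d + X)
    (N n : ℕ) (hn : 2 ≤ n) (hNn : n < N)
    (ω : AlgebraicClosure ℚ) (hω : ω ^ d = 1)
    (v : AddValuation (AlgebraicClosure ℚ) (WithTop ℝ))
    (hvp : v (p : AlgebraicClosure ℚ) = 1)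
    (hω1 : v (1 - ω) < 1)
    (Δ : Polynomial (AlgebraicClosure ℚ))
    (hΔ : Δ = (Γ (N - 1)).map (Int.castRingHom (AlgebraicClosure ℚ)) -
        C ω * (Γ (n - 1)).map (Int.castRingHom (AlgebraicClosure ℚ))) :
    ∀ β : AlgebraicClosure ℚ, Δ.eval β = 0 → (derivative Δ).eval β ≠ 0 := by
  set f := Int.castRingHom (AlgebraicClosure ℚ) with hf
  intro β hroot hder
  -- basic facts
  have hω0 : ω ≠ 0 := by
    intro h
    rw [h, zero_pow (by omega : d ≠ 0)] at hω
    exact zero_ne_one hω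
  have hvω : v ω = 0 := by
    have hd0 : d • v ω = 0 := by
      rw [← v.map_pow, hω, v.map_one]
    have hne : v ω ≠ ⊤ := v.ne_top_iff.mpr hω0
    obtain ⟨r, hr⟩ := WithTop.ne_top_iff_exists.mp hne
    rw [← hr] at hd0 ⊢
    rw [← WithTop.coe_nsmul] at hd0
    have : d • r = 0 := by exact_mod_cast hd0
    rw [nsmul_eq_mul] at this
    have hr0 : r = 0 := by
      rcases mul_eq_zero.mp this with h | h
      · exact absurd h (Nat.cast_ne_zero.mpr (by omega))
      · exact h
    simp [hr0]
  -- rewrite indices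
  have hN1 : N - 1 = (N - 2) + 1 := by omega
  have hn1 : n - 1 = (n - 2) + 1 := by omega
  obtain ⟨hAmon, hAdeg⟩ := gamma_monic d hd Γ h0 hrec (N - 2)
  obtain ⟨hBmon, hBdeg⟩ := gamma_monic d hd Γ h0 hrec (n - 2)
  rw [← hN1] at hAmon hAdeg
  rw [← hn1] at hBmon hBdeg
  set A : Polynomial (AlgebraicClosure ℚ) := (Γ (N - 1)).map f with hA
  set B : Polynomial (AlgebraicClosure ℚ) := (Γ (n - 1)).map f with hB
  have hAm : A.Monic := hAmon.map f
  have hBm : B.Monic := hBmon.map f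
  have hAd : A.natDegree = d ^ (N - 2) := by
    rw [hA, hAmon.natDegree_map, hAdeg]
  have hBd : B.natDegree = d ^ (n - 2) := by
    rw [hB, hBmon.natDegree_map, hBdeg]
  have hdltB : (C ω * B).degree < A.degree := by
    rw [degree_C_mul (by exact hω0), degree_eq_natDegree hBm.ne_zero,
      degree_eq_natDegree hAm.ne_zero, hAd, hBd]
    exact_mod_cast Nat.pow_lt_pow_right (by omega) (by omega)
  have hΔ' : Δ = A + -(C ω * B) := by rw [hΔ, sub_eq_add_neg]
  have hΔmon : Δ.Monic := by
    rw [hΔ']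
    exact hAm.add_of_left (by rwa [degree_neg])
  have hΔdeg : Δ.natDegree = d ^ (N - 2) := by
    rw [hΔ', natDegree_add_eq_left_of_degree_lt (by rwa [degree_neg]), hAd]
  set D := Δ.natDegree with hD
  have hD1 : 1 ≤ D := by
    rw [hΔdeg]
    exact Nat.one_le_two_pow.trans (Nat.pow_le_pow_left (by omega) _)
  -- coefficients have nonneg valuation
  have hvcoeff : ∀ i, 0 ≤ v (Δ.coeff i) := by
    intro i
    rw [hΔ, coeff_sub, coeff_C_mul, coeff_map, coeff_map, sub_eq_add_neg]
    refine le_trans (le_min ?_ ?_) (v.map_add _ _)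
    · exact vnat_nonneg v _
    · rw [v.map_neg, v.map_mul, hvω, zero_add]
      exact vnat_nonneg v _
  -- β is integral: 0 ≤ v β
  have hβ : 0 ≤ v β := by
    by_contra hcon
    push_neg at hcon
    obtain ⟨r, hr⟩ := WithTop.ne_top_iff_exists.mp (hcon.trans_le le_top).ne
    have hr0 : r < 0 := by
      have := hcon; rw [← hr] at this
      exact_mod_cast this
    have heq : β ^ D = -∑ i ∈ Finset.range D, Δ.coeff i * β ^ i := by
      have h := hroot
      rw [eval_eq_sum_range, Finset.sum_range_succ, ← hD, hΔmon.coeff_natDegree, one_mul] at h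
      exact eq_neg_of_add_eq_zero_right h
    have hlhs : v (β ^ D) = ((D : ℝ) * r : ℝ) := by
      rw [v.map_pow, ← hr, ← WithTop.coe_nsmul, nsmul_eq_mul]
    have hrhs : (((D : ℝ) - 1) * r : ℝ) ≤ v (β ^ D) := by
      rw [heq, v.map_neg]
      refine v.map_le_sum fun i hi => ?_
      rw [v.map_mul, v.map_pow, ← hr, ← WithTop.coe_nsmul, nsmul_eq_mul]
      have hi' : i ≤ D - 1 := by
        have := Finset.mem_range.mp hi; omega
      have h1 : ((D : ℝ) - 1) * r ≤ (i : ℝ) * r := by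
        apply mul_le_mul_of_nonpos_right _ hr0.le
        have : (i : ℝ) ≤ (D : ℝ) - 1 := by
          have : (i : ℝ) + 1 ≤ (D : ℝ) := by exact_mod_cast Finset.mem_range.mp hi
          linarith
        exact this
      calc ((((D : ℝ) - 1) * r : ℝ) : WithTop ℝ) ≤ (((i : ℝ) * r : ℝ) : WithTop ℝ) := by
            exact_mod_cast h1
        _ ≤ v (Δ.coeff i) + (((i : ℝ) * r : ℝ) : WithTop ℝ) := le_add_of_nonneg_left (hvcoeff i)
    rw [hlhs] at hrhs
    have : ((D : ℝ) - 1) * r ≤ (D : ℝ) * r := by exact_mod_cast hrhs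
    nlinarith [hr0]
  -- derivative computation
  obtain ⟨Q₁, hQ₁⟩ := gamma_deriv d hd p hpd Γ h0 hrec (N - 2)
  obtain ⟨Q₂, hQ₂⟩ := gamma_deriv d hd p hpd Γ h0 hrec (n - 2)
  rw [← hN1] at hQ₁
  rw [← hn1] at hQ₂
  set q₁ : AlgebraicClosure ℚ := ((Q₁.map f).eval β) with hq₁
  set q₂ : AlgebraicClosure ℚ := ((Q₂.map f).eval β) with hq₂
  have hdereval : (derivative Δ).eval β = (1 - ω) + (p : AlgebraicClosure ℚ) * (q₁ - ω * q₂) := by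
    rw [hΔ, derivative_sub, derivative_C_mul, hA, hB, derivative_map, derivative_map,
      hQ₁, hQ₂]
    simp only [eval_sub, eval_mul, eval_C, Polynomial.map_add, Polynomial.map_one,
      Polynomial.map_mul, Polynomial.map_C, eval_add, eval_one]
    have : f ((p : ℕ) : ℤ) = ((p : ℕ) : AlgebraicClosure ℚ) := by simp [hf]
    rw [this, ← hq₁, ← hq₂]
    ring
  rw [hdereval] at hder
  have hkey : (p : AlgebraicClosure ℚ) * (q₁ - ω * q₂) = -(1 - ω) := eq_neg_of_add_eq_zero_right hder
  have hvs : 0 ≤ v (q₁ - ω * q₂) := by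
    rw [sub_eq_add_neg]
    refine le_trans (le_min ?_ ?_) (v.map_add _ _)
    · exact veval_nonneg v hβ Q₁
    · rw [v.map_neg, v.map_mul, hvω, zero_add]
      exact veval_nonneg v hβ Q₂
  have h1 : (1 : WithTop ℝ) ≤ v ((p : AlgebraicClosure ℚ) * (q₁ - ω * q₂)) := by
    rw [v.map_mul, hvp]
    exact le_add_of_nonneg_right hvs
  rw [hkey, v.map_neg] at h1
  exact absurd (lt_of_le_of_lt h1 hω1) (lt_irrefl _)
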